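/- Under the same hypotheses (b a monoid homomorphism to [1,∞), C² = ∑_α b_α^{-(q-p)} < ∞), the opposite-order convolution also satisfies ‖g ⊗ f‖_q ≤ C ‖f‖_p ‖g‖_q for f with ‖f‖_p < ∞ and g with ‖g‖_q < ∞. -/

import Mathlib

/-- The Wick product (monoid convolution) on the free monoid on ℕ:
`(f ⊗ g)_γ = ∑_{αβ = γ} f_α g_β`. -/
noncomputable def wick (f g : FreeMonoid ℕ → ℂ) (γ : FreeMonoid ℕ) : ℂ :=
  ∑ j ∈ Finset.range ((FreeMonoid.toList γ).length + 1),
    f (FreeMonoid.ofList ((FreeMonoid.toList γ).take j)) *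
      g (FreeMonoid.ofList ((FreeMonoid.toList γ).drop j))

def splitEquivOp : (FreeMonoid ℕ × FreeMonoid ℕ) ≃
    (Σ γ : FreeMonoid ℕ, Fin ((FreeMonoid.toList γ).length + 1)) where
  toFun p := ⟨p.1 * p.2, ⟨(FreeMonoid.toList p.1).length, by
    simp [FreeMonoid.toList_mul, Nat.lt_succ_iff]⟩⟩
  invFun x := (FreeMonoid.ofList ((FreeMonoid.toList x.1).take x.2),
    FreeMonoid.ofList ((FreeMonoid.toList x.1).drop x.2))
  left_inv p := by
    cases p with
    | mk a b =>
      simp [FreeMonoid.toList_mul, List.take_left, List.drop_left]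
  right_inv := fun ⟨γ, j⟩ => by
    have hj : (j : ℕ) ≤ (FreeMonoid.toList γ).length := Nat.lt_succ_iff.mp j.2
    refine Sigma.ext ?_ ?_
    · simp [← FreeMonoid.ofList_append, FreeMonoid.ofList_toList]
    · rw [Fin.heq_ext_iff (by simp [← FreeMonoid.ofList_append, FreeMonoid.ofList_toList])]
      simp [hj]

/-- Non-commutative Våge-type inequality (squared form). Let `b : ℓ̃ → [1,∞)` be a monoid
homomorphism and set `‖f‖_p² = ∑_α |f_α|² b_α^{-p}`. If `C² = ∑_α b_α^{-(q-p)} < ∞`, then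
for `f` with `‖f‖_p < ∞` and `g` with `‖g‖_q < ∞` one has
`‖g ⊗ f‖_q² ≤ C² ‖f‖_p² ‖g‖_q²`, i.e. `‖g ⊗ f‖_q ≤ C ‖f‖_p ‖g‖_q` (opposite order). -/
theorem vage_inequality_opposite (b : FreeMonoid ℕ → ℝ) (hb1 : ∀ α, 1 ≤ b α)
    (hbmul : ∀ α β, b (α * β) = b α * b β)
    (p q : ℤ) (hC : Summable (fun α : FreeMonoid ℕ => b α ^ (-(q - p))))
    (f g : FreeMonoid ℕ → ℂ)
    (hf : Summable (fun α => ‖f α‖ ^ 2 * b α ^ (-p)))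
    (hg : Summable (fun α => ‖g α‖ ^ 2 * b α ^ (-q))) :
    Summable (fun γ => ‖wick g f γ‖ ^ 2 * b γ ^ (-q)) ∧
      (∑' γ, ‖wick g f γ‖ ^ 2 * b γ ^ (-q)) ≤
        (∑' α : FreeMonoid ℕ, b α ^ (-(q - p))) *
          ((∑' α, ‖f α‖ ^ 2 * b α ^ (-p)) * ∑' α, ‖g α‖ ^ 2 * b α ^ (-q)) := by
  classical
  have hb0 : ∀ α, 0 < b α := fun α => lt_of_lt_of_le one_pos (hb1 α)
  simp only [neg_sub] at hC ⊢
  set u : FreeMonoid ℕ → ℝ := fun α => ‖g α‖ ^ 2 * b α ^ (-q) with hu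
  set v : FreeMonoid ℕ → ℝ := fun α => ‖f α‖ ^ 2 * b α ^ (-p) with hv
  have hu0 : ∀ α, 0 ≤ u α := fun α =>
    mul_nonneg (pow_nonneg (norm_nonneg _) 2) (zpow_nonneg (hb0 α).le _)
  have hv0 : ∀ α, 0 ≤ v α := fun α =>
    mul_nonneg (pow_nonneg (norm_nonneg _) 2) (zpow_nonneg (hb0 α).le _)
  have hprod : Summable fun x : FreeMonoid ℕ × FreeMonoid ℕ => u x.1 * v x.2 :=
    hg.mul_of_nonneg hf hu0 hv0
  have hsig : Summable fun x : Σ γ : FreeMonoid ℕ, Fin ((FreeMonoid.toList γ).length + 1) =>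
      u (FreeMonoid.ofList ((FreeMonoid.toList x.1).take x.2)) *
        v (FreeMonoid.ofList ((FreeMonoid.toList x.1).drop x.2)) :=
    (splitEquivOp.symm.summable_iff
      (f := fun x : FreeMonoid ℕ × FreeMonoid ℕ => u x.1 * v x.2)).mpr hprod
  set G : FreeMonoid ℕ → ℝ := fun γ =>
    ∑ j ∈ Finset.range ((FreeMonoid.toList γ).length + 1),
      u (FreeMonoid.ofList ((FreeMonoid.toList γ).take j)) *
        v (FreeMonoid.ofList ((FreeMonoid.toList γ).drop j)) with hGdef
  have hGeq : ∀ γ : FreeMonoid ℕ, G γ = ∑' j : Fin ((FreeMonoid.toList γ).length + 1),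
      u (FreeMonoid.ofList ((FreeMonoid.toList γ).take j)) *
        v (FreeMonoid.ofList ((FreeMonoid.toList γ).drop j)) := by
    intro γ
    rw [tsum_fintype]
    exact (Fin.sum_univ_eq_sum_range (fun j =>
      u (FreeMonoid.ofList ((FreeMonoid.toList γ).take j)) *
        v (FreeMonoid.ofList ((FreeMonoid.toList γ).drop j))) _).symm
  have hG : Summable G := (summable_congr hGeq).mpr hsig.sigma
  have hGt : ∑' γ, G γ = (∑' α, u α) * ∑' β, v β := by
    calc ∑' γ, G γ = ∑' γ, ∑' j : Fin ((FreeMonoid.toList γ).length + 1),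
        u (FreeMonoid.ofList ((FreeMonoid.toList γ).take j)) *
          v (FreeMonoid.ofList ((FreeMonoid.toList γ).drop j)) := tsum_congr hGeq
      _ = ∑' x : Σ γ : FreeMonoid ℕ, Fin ((FreeMonoid.toList γ).length + 1),
          u (FreeMonoid.ofList ((FreeMonoid.toList x.1).take x.2)) *
            v (FreeMonoid.ofList ((FreeMonoid.toList x.1).drop x.2)) := (Summable.tsum_sigma hsig).symm
      _ = ∑' x : FreeMonoid ℕ × FreeMonoid ℕ, u x.1 * v x.2 :=
          splitEquivOp.symm.tsum_eq (fun x : FreeMonoid ℕ × FreeMonoid ℕ => u x.1 * v x.2)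
      _ = ∑' α, ∑' β, u α * v β := Summable.tsum_prod hprod
      _ = ∑' α, u α * ∑' β, v β := tsum_congr fun α => tsum_mul_left
      _ = _ := tsum_mul_right
  have key : ∀ γ, ‖wick g f γ‖ ^ 2 * b γ ^ (-q) ≤ (∑' α, b α ^ (p - q)) * G γ := by
    intro γ
    set n := (FreeMonoid.toList γ).length with hn
    set s := Finset.range (n + 1) with hs
    set tk : ℕ → FreeMonoid ℕ := fun j => FreeMonoid.ofList ((FreeMonoid.toList γ).take j)
      with htk
    set dp : ℕ → FreeMonoid ℕ := fun j => FreeMonoid.ofList ((FreeMonoid.toList γ).drop j)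
      with hdp
    have hsplit : ∀ j, tk j * dp j = γ := fun j => by
      rw [htk, hdp, ← FreeMonoid.ofList_append, List.take_append_drop,
        FreeMonoid.ofList_toList]
    have hb_split : ∀ j, b γ = b (tk j) * b (dp j) := fun j => by
      rw [← hbmul, hsplit]
    have h1 : ‖wick g f γ‖ ≤ ∑ j ∈ s, ‖g (tk j)‖ * ‖f (dp j)‖ := by
      calc ‖wick g f γ‖ = ‖∑ j ∈ s, g (tk j) * f (dp j)‖ := rfl
        _ ≤ ∑ j ∈ s, ‖g (tk j) * f (dp j)‖ := norm_sum_le _ _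
        _ = ∑ j ∈ s, ‖g (tk j)‖ * ‖f (dp j)‖ := by simp [norm_mul]
    have hXY : ∀ j, Real.sqrt (b (dp j) ^ (p - q)) *
        (Real.sqrt (b (dp j) ^ (q - p)) * (‖g (tk j)‖ * ‖f (dp j)‖)) =
        ‖g (tk j)‖ * ‖f (dp j)‖ := by
      intro j
      rw [← mul_assoc, ← Real.sqrt_mul (zpow_nonneg (hb0 _).le _),
        ← zpow_add₀ (hb0 _).ne']
      have : p - q + (q - p) = 0 := by ring
      rw [this, zpow_zero, Real.sqrt_one, one_mul]
    have hCS : (∑ j ∈ s, ‖g (tk j)‖ * ‖f (dp j)‖) ^ 2 ≤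
        (∑ j ∈ s, b (dp j) ^ (p - q)) *
          ∑ j ∈ s, b (dp j) ^ (q - p) * (‖g (tk j)‖ * ‖f (dp j)‖) ^ 2 := by
      calc (∑ j ∈ s, ‖g (tk j)‖ * ‖f (dp j)‖) ^ 2
          = (∑ j ∈ s, Real.sqrt (b (dp j) ^ (p - q)) *
              (Real.sqrt (b (dp j) ^ (q - p)) * (‖g (tk j)‖ * ‖f (dp j)‖))) ^ 2 := by
            rw [Finset.sum_congr rfl fun j _ => hXY j]
        _ ≤ (∑ j ∈ s, Real.sqrt (b (dp j) ^ (p - q)) ^ 2) *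
            ∑ j ∈ s, (Real.sqrt (b (dp j) ^ (q - p)) * (‖g (tk j)‖ * ‖f (dp j)‖)) ^ 2 :=
            Finset.sum_mul_sq_le_sq_mul_sq s _ _
        _ = (∑ j ∈ s, b (dp j) ^ (p - q)) *
            ∑ j ∈ s, b (dp j) ^ (q - p) * (‖g (tk j)‖ * ‖f (dp j)‖) ^ 2 := by
            congr 1
            · exact Finset.sum_congr rfl fun j _ => Real.sq_sqrt (zpow_nonneg (hb0 _).le _)
            · refine Finset.sum_congr rfl fun j _ => ?_
              rw [mul_pow, Real.sq_sqrt (zpow_nonneg (hb0 _).le _)]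
    have hinj : ∀ x ∈ s, ∀ y ∈ s, dp x = dp y → x = y := by
      intro x hx y hy hEq
      have hx' : x < n + 1 := Finset.mem_range.mp hx
      have hy' : y < n + 1 := Finset.mem_range.mp hy
      have := congrArg (fun z => (FreeMonoid.toList z).length) hEq
      simp only [hdp, FreeMonoid.toList_ofList, List.length_drop] at this
      omega
    have hS1 : ∑ j ∈ s, b (dp j) ^ (p - q) ≤ ∑' α, b α ^ (p - q) := by
      calc ∑ j ∈ s, b (dp j) ^ (p - q)
          = ∑ β ∈ s.image dp, b β ^ (p - q) := (Finset.sum_image (f := fun β => b β ^ (p - q)) hinj).symm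
        _ ≤ ∑' α, b α ^ (p - q) :=
            Summable.sum_le_tsum _ (fun β _ => zpow_nonneg (hb0 β).le _) hC
    have hS2nonneg : 0 ≤ ∑ j ∈ s, b (dp j) ^ (q - p) * (‖g (tk j)‖ * ‖f (dp j)‖) ^ 2 :=
      Finset.sum_nonneg fun j _ => mul_nonneg (zpow_nonneg (hb0 _).le _) (sq_nonneg _)
    have h2 : ‖wick g f γ‖ ^ 2 ≤ (∑' α, b α ^ (p - q)) *
        ∑ j ∈ s, b (dp j) ^ (q - p) * (‖g (tk j)‖ * ‖f (dp j)‖) ^ 2 :=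
      le_trans (le_trans (pow_le_pow_left₀ (norm_nonneg _) h1 2) hCS)
        (mul_le_mul_of_nonneg_right hS1 hS2nonneg)
    have h3 : ‖wick g f γ‖ ^ 2 * b γ ^ (-q) ≤ (∑' α, b α ^ (p - q)) *
        (∑ j ∈ s, b (dp j) ^ (q - p) * (‖g (tk j)‖ * ‖f (dp j)‖) ^ 2) * b γ ^ (-q) :=
      mul_le_mul_of_nonneg_right h2 (zpow_nonneg (hb0 γ).le _)
    refine h3.trans_eq ?_
    rw [mul_assoc]
    congr 1
    rw [hGdef, Finset.sum_mul]
    refine Finset.sum_congr rfl fun j _ => ?_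
    rw [hb_split j, mul_zpow]
    have e1 : b (dp j) ^ (q - p) * b (dp j) ^ (-q) = b (dp j) ^ (-p) := by
      rw [← zpow_add₀ (hb0 _).ne']
      congr 1
      ring
    simp only [hu, hv]
    calc b (dp j) ^ (q - p) * (‖g (tk j)‖ * ‖f (dp j)‖) ^ 2 *
          (b (tk j) ^ (-q) * b (dp j) ^ (-q))
        = (‖g (tk j)‖ ^ 2 * b (tk j) ^ (-q)) *
            (‖f (dp j)‖ ^ 2 * (b (dp j) ^ (q - p) * b (dp j) ^ (-q))) := by ring
      _ = ‖g (tk j)‖ ^ 2 * b (tk j) ^ (-q) * (‖f (dp j)‖ ^ 2 * b (dp j) ^ (-p)) := by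
          rw [e1]
  have hF0 : ∀ γ, 0 ≤ ‖wick g f γ‖ ^ 2 * b γ ^ (-q) := fun γ =>
    mul_nonneg (pow_nonneg (norm_nonneg _) 2) (zpow_nonneg (hb0 γ).le _)
  have hCG : Summable fun γ => (∑' α, b α ^ (p - q)) * G γ := hG.mul_left _
  have hFsum : Summable (fun γ => ‖wick g f γ‖ ^ 2 * b γ ^ (-q)) :=
    Summable.of_nonneg_of_le hF0 key hCG
  refine ⟨hFsum, ?_⟩
  calc ∑' γ, ‖wick g f γ‖ ^ 2 * b γ ^ (-q)
      ≤ ∑' γ, (∑' α, b α ^ (p - q)) * G γ := Summable.tsum_le_tsum key hFsum hCG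
    _ = (∑' α, b α ^ (p - q)) * ∑' γ, G γ := tsum_mul_left
    _ = (∑' α : FreeMonoid ℕ, b α ^ (p - q)) * ((∑' α, v α) * ∑' α, u α) := by
        rw [hGt]; ring
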